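/- Let phi(x) in Z[x] be monic and irreducible modulo all primes <= n+1, and let a_0(x), ..., a_n(x) in Z[x] each have degree less than deg phi, with the content of a_0(x) not divisible by any prime <= n+1. Set f(x) = sum_{j=0}^{n} a_j(x) * phi(x)^j/(j+1)!. Suppose k is a positive integer with k <= n/2 and there exists a prime p >= k+2 dividing (n+1)*n*(n-1)*...*(n-k+2) such that p does not divide the leading coefficient of a_n(x). Then f(x) has no factor in Z[x] whose degree lies in the interval [k*deg phi, (k+1)*deg phi). -/

import Mathlib

open Polynomial Finset

namespace NFII

noncomputable def dig (φ P : Polynomial ℤ) (r : ℕ) : Polynomial ℤ :=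
  (P /ₘ φ ^ r) %ₘ φ

lemma dig_zero (φ P : Polynomial ℤ) : dig φ P 0 = P %ₘ φ := by
  simp [dig]

lemma degree_dig_lt (φ : Polynomial ℤ) (hφ : φ.Monic) (P : Polynomial ℤ) (r : ℕ) :
    (dig φ P r).degree < φ.degree :=
  degree_modByMonic_lt _ hφ

lemma dig_succ (φ : Polynomial ℤ) (hφ : φ.Monic) (P : Polynomial ℤ) (r : ℕ) :
    dig φ P (r + 1) = dig φ (P /ₘ φ) r := by
  have key : P /ₘ φ ^ (r + 1) = (P /ₘ φ) /ₘ φ ^ r := by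
    have e1 := modByMonic_add_div P φ
    have e2 := modByMonic_add_div (P /ₘ φ) (φ ^ r)
    have pf : P %ₘ φ + φ * ((P /ₘ φ) %ₘ φ ^ r) + φ ^ (r + 1) * ((P /ₘ φ) /ₘ φ ^ r) = P := by
      rw [pow_succ']
      linear_combination e1 + φ * e2
    have hdeg : (P %ₘ φ + φ * ((P /ₘ φ) %ₘ φ ^ r)).degree < (φ ^ (r + 1)).degree := by
      have hps : (φ ^ (r + 1)).degree = φ.degree + (φ ^ r).degree := by
        rw [pow_succ', degree_mul]
      rw [hps]
      refine lt_of_le_of_lt (degree_add_le _ _) (max_lt ?_ ?_)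
      · exact lt_of_lt_of_le (degree_modByMonic_lt _ hφ)
          (le_add_of_nonneg_right (zero_le_degree_iff.2 (hφ.pow r).ne_zero))
      · rw [degree_mul]
        have : ((P /ₘ φ) %ₘ φ ^ r).degree < (φ ^ r).degree :=
          degree_modByMonic_lt _ (hφ.pow r)
        exact WithBot.add_lt_add_left (by simpa using hφ.ne_zero) this
    exact (div_modByMonic_unique (f := P) ((P /ₘ φ) /ₘ φ ^ r)
      (P %ₘ φ + φ * ((P /ₘ φ) %ₘ φ ^ r)) (hφ.pow (r + 1)) ⟨pf, hdeg⟩).1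
  rw [dig, key, dig]

lemma dig_eq_zero_of_lt (φ : Polynomial ℤ) (hφ : φ.Monic) (P : Polynomial ℤ) (r : ℕ)
    (h : P.degree < (φ ^ r).degree) : dig φ P r = 0 := by
  rw [dig, (divByMonic_eq_zero_iff (hφ.pow r)).2 h, zero_modByMonic]

lemma degree_le_pow_of_le (φ : Polynomial ℤ) (hφ : φ.Monic) {j : ℕ} (hj : 1 ≤ j) :
    φ.degree ≤ (φ ^ j).degree := by
  obtain ⟨i, rfl⟩ := Nat.exists_eq_add_of_le hj
  rw [pow_add, degree_mul, pow_one]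
  exact le_add_of_nonneg_right (zero_le_degree_iff.2 (hφ.pow i).ne_zero)

lemma dig_sum_eq (φ : Polynomial ℤ) (hφ : φ.Monic) (hd : 0 < φ.natDegree)
    (P : Polynomial ℤ) (R : ℕ) (h : P.natDegree < (R + 1) * φ.natDegree) :
    ∑ r ∈ range (R + 1), dig φ P r * φ ^ r = P := by
  induction R generalizing P with
  | zero =>
    have hdeg : P.degree < φ.degree := by
      have h' : P.natDegree < φ.natDegree := by simpa using h
      rw [degree_eq_natDegree hφ.ne_zero]
      exact lt_of_le_of_lt degree_le_natDegree (by exact_mod_cast h')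
    simp [dig_zero, (modByMonic_eq_self_iff hφ).2 hdeg]
  | succ R ih =>
    have hQ : (P /ₘ φ).natDegree < (R + 1) * φ.natDegree := by
      obtain ⟨X, hX⟩ : ∃ X, (R + 1) * φ.natDegree = X := ⟨_, rfl⟩
      have hX1 : 1 ≤ X := hX ▸ Nat.mul_pos (by omega) hd
      rw [natDegree_divByMonic P hφ, hX]
      rw [show (R + 1 + 1) * φ.natDegree = X + φ.natDegree by rw [← hX]; ring] at h
      omega
    calc ∑ r ∈ range (R + 2), dig φ P r * φ ^ r
        = (∑ r ∈ range (R + 1), dig φ P (r + 1) * φ ^ (r + 1)) + dig φ P 0 * φ ^ 0 :=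
          Finset.sum_range_succ' _ _
      _ = φ * (∑ r ∈ range (R + 1), dig φ (P /ₘ φ) r * φ ^ r) + P %ₘ φ := by
          rw [Finset.mul_sum, dig_zero]
          congr 1
          · refine Finset.sum_congr rfl fun r _ => ?_
            rw [dig_succ φ hφ, pow_succ']
            ring
          · simp
      _ = P := by rw [ih _ hQ]; linear_combination modByMonic_add_div P φ

lemma dig_eq_of_expansion (φ : Polynomial ℤ) (hφ : φ.Monic) (hd : 0 < φ.natDegree)
    (B : ℕ → Polynomial ℤ) (n : ℕ) (hB : ∀ j ≤ n, (B j).degree < φ.degree) :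
    ∀ j, dig φ (∑ i ∈ range (n + 1), B i * φ ^ i) j = if j ≤ n then B j else 0 := by
  induction n generalizing B with
  | zero =>
    intro j
    rcases Nat.eq_zero_or_pos j with rfl | hj
    · simpa [dig_zero] using (modByMonic_eq_self_iff hφ).2 (hB 0 le_rfl)
    · rw [if_neg (by omega)]
      refine dig_eq_zero_of_lt φ hφ _ j (lt_of_lt_of_le ?_ (degree_le_pow_of_le φ hφ hj))
      simpa using hB 0 le_rfl
  | succ n ih =>
    intro j
    set P := ∑ i ∈ range (n + 2), B i * φ ^ i with hP
    have hsplit : P = B 0 + φ * ∑ i ∈ range (n + 1), B (i + 1) * φ ^ i := by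
      rw [hP, Finset.sum_range_succ']
      have e : ∑ i ∈ range (n + 1), B (i + 1) * φ ^ (i + 1)
          = φ * ∑ i ∈ range (n + 1), B (i + 1) * φ ^ i := by
        rw [Finset.mul_sum]
        exact Finset.sum_congr rfl fun r _ => by rw [pow_succ']; ring
      rw [e]; ring
    have hmod : P %ₘ φ = B 0 ∧ P /ₘ φ = ∑ i ∈ range (n + 1), B (i + 1) * φ ^ i := by
      have := div_modByMonic_unique (f := P) (∑ i ∈ range (n + 1), B (i + 1) * φ ^ i)
        (B 0) hφ ⟨by rw [hsplit], hB 0 (by omega)⟩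
      exact ⟨this.2, this.1⟩
    rcases Nat.eq_zero_or_pos j with rfl | hj
    · simpa [dig_zero] using hmod.1
    · obtain ⟨j', rfl⟩ : ∃ j', j = j' + 1 := ⟨j - 1, by omega⟩
      rw [dig_succ φ hφ, hmod.2, ih (fun i => B (i + 1)) (fun i hi => hB (i + 1) (by omega)) j']
      by_cases hc : j' ≤ n
      · rw [if_pos hc, if_pos (by omega)]
      · rw [if_neg hc, if_neg (by omega)]

lemma exists_top_dig (φ : Polynomial ℤ) (hφ : φ.Monic) (hd : 0 < φ.natDegree)
    (P : Polynomial ℤ) (hP : P ≠ 0) :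
    ∃ M, dig φ P M ≠ 0 ∧ P.natDegree = M * φ.natDegree + (dig φ P M).natDegree ∧
      P.leadingCoeff = (dig φ P M).leadingCoeff := by
  generalize hN : P.natDegree = N
  induction N using Nat.strong_induction_on generalizing P with
  | _ N ih =>
  by_cases hdeg : P.degree < φ.degree
  · have e0 : dig φ P 0 = P := by rw [dig_zero]; exact (modByMonic_eq_self_iff hφ).2 hdeg
    exact ⟨0, by rw [e0]; exact hP, by rw [e0, ← hN]; ring, by rw [e0]⟩
  · push_neg at hdeg
    have hQ : P /ₘ φ ≠ 0 := by
      rw [Ne, divByMonic_eq_zero_iff hφ]; exact not_lt.2 hdeg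
    have hdegP : φ.natDegree ≤ P.natDegree := by
      have := degree_eq_natDegree hP ▸ degree_eq_natDegree hφ.ne_zero ▸ hdeg
      exact_mod_cast this
    have hQdeg : (P /ₘ φ).natDegree = P.natDegree - φ.natDegree :=
      natDegree_divByMonic P hφ
    obtain ⟨M, h1, h2, h3⟩ := ih ((P /ₘ φ).natDegree) (by omega) (P /ₘ φ) hQ rfl
    refine ⟨M + 1, by rwa [dig_succ φ hφ], ?_, ?_⟩
    · rw [dig_succ φ hφ, ← hN]
      have : P.natDegree = (P /ₘ φ).natDegree + φ.natDegree := by omega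
      rw [this, h2]; ring
    · have hφQ : (φ * (P /ₘ φ)).degree = φ.degree + (P /ₘ φ).degree := degree_mul
      have hlt : (P %ₘ φ).degree < (φ * (P /ₘ φ)).degree := by
        rw [hφQ]
        exact lt_of_lt_of_le (degree_modByMonic_lt _ hφ)
          (le_add_of_nonneg_right (zero_le_degree_iff.2 hQ))
      have hpdq : P = P %ₘ φ + φ * (P /ₘ φ) := (modByMonic_add_div P φ).symm
      have hl : P.leadingCoeff = (P /ₘ φ).leadingCoeff := by
        conv_lhs => rw [hpdq]
        rw [leadingCoeff_add_of_degree_lt hlt, leadingCoeff_mul, hφ.leadingCoeff, one_mul]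
      rw [dig_succ φ hφ, ← h3]
      exact hl

noncomputable def nu (p : ℕ) (P : Polynomial ℤ) : ℕ∞ :=
  if P = 0 then ⊤ else (P.content.natAbs.factorization p : ℕ∞)

lemma nu_zero (p : ℕ) : nu p 0 = ⊤ := by simp [nu]

lemma nu_eq_top_iff (p : ℕ) (P : Polynomial ℤ) : nu p P = ⊤ ↔ P = 0 := by
  unfold nu
  split
  · simpa
  · simp_all

lemma dvd_content_iff (c : ℤ) (P : Polynomial ℤ) : c ∣ P.content ↔ ∀ i, c ∣ P.coeff i := by
  constructor
  · exact fun h i => h.trans (content_dvd_coeff i)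
  · intro h
    exact Finset.dvd_gcd fun i _ => h i

lemma le_nu_iff (p : ℕ) (hp : p.Prime) (P : Polynomial ℤ) (a : ℕ) :
    (a : ℕ∞) ≤ nu p P ↔ C ((p : ℤ) ^ a) ∣ P := by
  rcases eq_or_ne P 0 with rfl | hP
  · simp [nu]
  · rw [nu, if_neg hP, Nat.cast_le, C_dvd_iff_dvd_coeff, ← dvd_content_iff]
    have hc : P.content.natAbs ≠ 0 := by
      simp [Int.natAbs_ne_zero, content_eq_zero_iff, hP]
    rw [← hp.pow_dvd_iff_le_factorization hc]
    rw [← Int.natAbs_dvd_natAbs]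
    have : ((p : ℤ) ^ a).natAbs = p ^ a := by
      rw [Int.natAbs_pow, Int.natAbs_natCast]
    rw [this]

lemma nu_mul (p : ℕ) (hp : p.Prime) (P Q : Polynomial ℤ) :
    nu p (P * Q) = nu p P + nu p Q := by
  rcases eq_or_ne P 0 with rfl | hP
  · simp [nu]
  rcases eq_or_ne Q 0 with rfl | hQ
  · simp [nu]
  have hPQ : P * Q ≠ 0 := mul_ne_zero hP hQ
  rw [nu, nu, nu, if_neg hP, if_neg hQ, if_neg hPQ, content_mul, Int.natAbs_mul,
    Nat.factorization_mul (by simp [Int.natAbs_ne_zero, content_eq_zero_iff, hP])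
      (by simp [Int.natAbs_ne_zero, content_eq_zero_iff, hQ])]
  simp

lemma nu_C_mul (p : ℕ) (hp : p.Prime) (c : ℕ) (hc : c ≠ 0) (P : Polynomial ℤ) :
    nu p (C (c : ℤ) * P) = (c.factorization p : ℕ∞) + nu p P := by
  rcases eq_or_ne P 0 with rfl | hP
  · simp [nu]
  have hCP : C (c : ℤ) * P ≠ 0 := by
    apply mul_ne_zero _ hP
    simpa using hc
  rw [nu, nu, if_neg hP, if_neg hCP, content_C_mul]
  have hnorm : normalize ((c : ℤ)) = (c : ℤ) := by
    rw [Int.normalize_of_nonneg (by positivity)]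
  rw [hnorm, Int.natAbs_mul, Int.natAbs_natCast,
    Nat.factorization_mul hc (by simp [Int.natAbs_ne_zero, content_eq_zero_iff, hP])]
  simp

lemma min_le_nu_add (p : ℕ) (hp : p.Prime) (P Q : Polynomial ℤ) :
    min (nu p P) (nu p Q) ≤ nu p (P + Q) := by
  rcases eq_or_ne (min (nu p P) (nu p Q)) ⊤ with htop | hne
  · rw [_root_.min_eq_top] at htop
    have h1 : P = 0 := (nu_eq_top_iff p P).1 htop.1
    have h2 : Q = 0 := (nu_eq_top_iff p Q).1 htop.2
    subst h1; subst h2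
    simp
  · obtain ⟨a, ha⟩ := WithTop.ne_top_iff_exists.1 hne
    rw [← ha]
    have h1 : C ((p : ℤ) ^ a) ∣ P := (le_nu_iff p hp P a).1 (ha.le.trans (min_le_left _ _))
    have h2 : C ((p : ℤ) ^ a) ∣ Q := (le_nu_iff p hp Q a).1 (ha.le.trans (min_le_right _ _))
    exact (le_nu_iff p hp _ a).2 (dvd_add h1 h2)

lemma le_nu_sum (p : ℕ) (hp : p.Prime) {α : Type} [DecidableEq α] (s : Finset α) (f : α → Polynomial ℤ)
    (c : ℕ∞) (h : ∀ i ∈ s, c ≤ nu p (f i)) : c ≤ nu p (∑ i ∈ s, f i) := by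
  induction s using Finset.induction with
  | empty => simp [nu_zero]
  | insert x s hnotmem ih =>
    rw [Finset.sum_insert hnotmem]
    refine le_trans (le_min (h x (by simp)) (ih fun i hi => h i (by simp [hi]))) ?_
    exact min_le_nu_add p hp _ _

lemma nu_add_eq_left (p : ℕ) (hp : p.Prime) (P Q : Polynomial ℤ) (h : nu p P < nu p Q) :
    nu p (P + Q) = nu p P := by
  have hPne : nu p P ≠ ⊤ := h.ne_top
  obtain ⟨a, ha0⟩ := WithTop.ne_top_iff_exists.1 hPne
  have ha : (a : ℕ∞) = nu p P := by exact_mod_cast ha0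
  refine le_antisymm ?_ (by rw [← min_eq_left h.le]; exact min_le_nu_add p hp P Q)
  by_contra hcon
  push_neg at hcon
  have hcast : ((a : ℕ∞) + 1) = ((a + 1 : ℕ) : ℕ∞) := by push_cast; ring
  have h1 : ((a + 1 : ℕ) : ℕ∞) ≤ nu p (P + Q) := by
    rw [← hcast]
    exact Order.add_one_le_of_lt (by rw [ha]; exact hcon)
  have h2 : ((a + 1 : ℕ) : ℕ∞) ≤ nu p Q := by
    rw [← hcast]
    exact Order.add_one_le_of_lt (by rw [ha]; exact h)
  have h3 : C ((p : ℤ) ^ (a + 1)) ∣ P :=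
    (dvd_add_right ((le_nu_iff p hp Q (a + 1)).1 h2)).1
      (by rw [add_comm Q P]; exact (le_nu_iff p hp _ (a + 1)).1 h1)
  have h4 : ((a + 1 : ℕ) : ℕ∞) ≤ nu p P := (le_nu_iff p hp P (a + 1)).2 h3
  rw [← ha, Nat.cast_le] at h4
  omega

lemma C_mul_modByMonic (φ : Polynomial ℤ) (hφ : φ.Monic) (c : ℤ) (P : Polynomial ℤ) :
    (C c * P) %ₘ φ = C c * (P %ₘ φ) ∧ (C c * P) /ₘ φ = C c * (P /ₘ φ) := by
  have hdeg : (C c * (P %ₘ φ)).degree < φ.degree := by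
    refine lt_of_le_of_lt ?_ (degree_modByMonic_lt P hφ)
    refine le_trans (degree_mul_le _ _) ?_
    refine le_trans (add_le_add_left degree_C_le _) ?_
    rw [zero_add]
  have := div_modByMonic_unique (f := C c * P) (C c * (P /ₘ φ)) (C c * (P %ₘ φ)) hφ
    ⟨by linear_combination C c * (modByMonic_add_div P φ), hdeg⟩
  exact ⟨this.2, this.1⟩

lemma nu_le_modByMonic (p : ℕ) (hp : p.Prime) (φ : Polynomial ℤ) (hφ : φ.Monic)
    (P : Polynomial ℤ) : nu p P ≤ nu p (P %ₘ φ) := by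
  rcases eq_or_ne P 0 with rfl | hP
  · simp
  obtain ⟨a, ha⟩ : ∃ a : ℕ, nu p P = (a : ℕ∞) := by
    obtain ⟨a, ha0⟩ := WithTop.ne_top_iff_exists.1 ((nu_eq_top_iff p P).not.2 hP)
    exact ⟨a, by exact_mod_cast ha0.symm⟩
  rw [ha]
  obtain ⟨P', rfl⟩ := (le_nu_iff p hp P a).1 ha.ge
  rw [(C_mul_modByMonic φ hφ _ P').1]
  exact (le_nu_iff p hp _ a).2 (Dvd.intro _ rfl)

lemma nu_le_divByMonic (p : ℕ) (hp : p.Prime) (φ : Polynomial ℤ) (hφ : φ.Monic)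
    (P : Polynomial ℤ) : nu p P ≤ nu p (P /ₘ φ) := by
  rcases eq_or_ne P 0 with rfl | hP
  · simp
  obtain ⟨a, ha⟩ : ∃ a : ℕ, nu p P = (a : ℕ∞) := by
    obtain ⟨a, ha0⟩ := WithTop.ne_top_iff_exists.1 ((nu_eq_top_iff p P).not.2 hP)
    exact ⟨a, by exact_mod_cast ha0.symm⟩
  rw [ha]
  obtain ⟨P', rfl⟩ := (le_nu_iff p hp P a).1 ha.ge
  rw [(C_mul_modByMonic φ hφ _ P').2]
  exact (le_nu_iff p hp _ a).2 (Dvd.intro _ rfl)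

lemma one_le_nu_iff (p : ℕ) (hp : p.Prime) (P : Polynomial ℤ) :
    1 ≤ nu p P ↔ P.map (Int.castRingHom (ZMod p)) = 0 := by
  have : (1 : ℕ∞) = ((1 : ℕ) : ℕ∞) := by simp
  rw [this, le_nu_iff p hp P 1, C_dvd_iff_dvd_coeff]
  simp only [pow_one]
  constructor
  · intro h
    ext i
    simp only [coeff_map, coeff_zero, eq_intCast]
    rw [ZMod.intCast_zmod_eq_zero_iff_dvd]
    exact h i
  · intro h i
    have := congrArg (fun q => Polynomial.coeff q i) h
    simp only [coeff_map, coeff_zero, eq_intCast] at this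
    rwa [ZMod.intCast_zmod_eq_zero_iff_dvd] at this

lemma nu_eq_zero_of_not_dvd_leadingCoeff (p : ℕ) (hp : p.Prime) (P : Polynomial ℤ)
    (h : ¬ ((p : ℤ) ∣ P.leadingCoeff)) : nu p P = 0 := by
  have hP : P ≠ 0 := by
    rintro rfl
    exact h (by simp)
  rw [nu, if_neg hP]
  norm_cast
  apply Nat.factorization_eq_zero_of_not_dvd
  intro hdvd
  apply h
  have h1 : (p : ℤ) ∣ P.content := by
    rw [← Int.natAbs_dvd_natAbs, Int.natAbs_natCast]
    exact hdvd
  exact h1.trans (content_dvd_coeff P.natDegree)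

lemma exists_nu_zero (p : ℕ) (hp : p.Prime) (P : Polynomial ℤ) (hP : P ≠ 0) :
    ∃ (a : ℕ) (P₀ : Polynomial ℤ), P = C ((p : ℤ) ^ a) * P₀ ∧ nu p P₀ = 0 ∧
      nu p P = (a : ℕ∞) ∧ P₀.degree = P.degree := by
  obtain ⟨a, ha⟩ : ∃ a : ℕ, nu p P = (a : ℕ∞) := by
    obtain ⟨a, ha0⟩ := WithTop.ne_top_iff_exists.1 ((nu_eq_top_iff p P).not.2 hP)
    exact ⟨a, by exact_mod_cast ha0.symm⟩
  obtain ⟨P₀, rfl⟩ := (le_nu_iff p hp P a).1 ha.ge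
  have hpa : ((p : ℤ) ^ a) ≠ 0 := pow_ne_zero _ (by exact_mod_cast hp.pos.ne')
  have hP₀ : P₀ ≠ 0 := by rintro rfl; simp at hP
  have hfac : ((p ^ a : ℕ).factorization p : ℕ∞) = (a : ℕ∞) := by
    rw [Nat.Prime.factorization_pow hp]
    simp
  have hCn : C ((p : ℤ) ^ a) = C (((p ^ a : ℕ) : ℤ)) := by push_cast; ring_nf
  have key : nu p (C ((p : ℤ) ^ a) * P₀) = (a : ℕ∞) + nu p P₀ := by
    rw [hCn, nu_C_mul p hp _ (pow_ne_zero _ hp.pos.ne') P₀, hfac]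
  have h0 : nu p P₀ = 0 := by
    by_contra h0
    have h1 : (1 : ℕ∞) ≤ nu p P₀ := ENat.one_le_iff_ne_zero.2 h0
    have : ((a : ℕ∞) + 1) ≤ (a : ℕ∞) := by
      calc ((a : ℕ∞) + 1) ≤ (a : ℕ∞) + nu p P₀ := add_le_add_right h1 _
        _ = nu p (C ((p : ℤ) ^ a) * P₀) := key.symm
        _ = (a : ℕ∞) := ha
    rw [show ((a : ℕ∞) + 1) = ((a + 1 : ℕ) : ℕ∞) by push_cast; ring, Nat.cast_le] at this
    omega
  refine ⟨a, P₀, rfl, h0, ha, ?_⟩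
  rw [degree_mul, degree_C hpa, zero_add]

lemma nu_mul_modByMonic (p : ℕ) (hp : p.Prime) (φ : Polynomial ℤ) (hφ : φ.Monic)
    (hirr : Irreducible (φ.map (Int.castRingHom (ZMod p))))
    (E F : Polynomial ℤ) (hE : E.degree < φ.degree) (hF : F.degree < φ.degree) :
    nu p ((E * F) %ₘ φ) = nu p E + nu p F := by
  haveI : Fact p.Prime := ⟨hp⟩
  rcases eq_or_ne E 0 with rfl | hEne
  · simp [nu_zero]
  rcases eq_or_ne F 0 with rfl | hFne
  · simp [nu_zero]
  obtain ⟨a, E₀, rfl, hE₀, hnuE, hdegE⟩ := exists_nu_zero p hp E hEne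
  obtain ⟨b, F₀, rfl, hF₀, hnuF, hdegF⟩ := exists_nu_zero p hp F hFne
  have hprod : (C ((p : ℤ) ^ a) * E₀) * (C ((p : ℤ) ^ b) * F₀)
      = C ((p : ℤ) ^ (a + b)) * (E₀ * F₀) := by
    rw [pow_add, C_mul]; ring
  rw [hprod, (C_mul_modByMonic φ hφ _ (E₀ * F₀)).1]
  have hmapE : E₀.map (Int.castRingHom (ZMod p)) ≠ 0 := by
    intro hc
    rw [← one_le_nu_iff p hp] at hc
    rw [hE₀] at hc
    simp at hc
  have hmapF : F₀.map (Int.castRingHom (ZMod p)) ≠ 0 := by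
    intro hc
    rw [← one_le_nu_iff p hp] at hc
    rw [hF₀] at hc
    simp at hc
  have hφm : (φ.map (Int.castRingHom (ZMod p))).Monic := hφ.map _
  have hdegφ : (φ.map (Int.castRingHom (ZMod p))).degree = φ.degree := by
    rw [hφ.degree_map]
  have hndvd : ¬ (φ.map (Int.castRingHom (ZMod p)) ∣
      (E₀.map (Int.castRingHom (ZMod p)) * F₀.map (Int.castRingHom (ZMod p)))) := by
    intro hdvd
    have hprime : Prime (φ.map (Int.castRingHom (ZMod p))) :=
      UniqueFactorizationMonoid.irreducible_iff_prime.1 hirr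
    have hE₀deg : E₀.degree < φ.degree := hdegE ▸ hE
    have hF₀deg : F₀.degree < φ.degree := hdegF ▸ hF
    rcases hprime.2.2 _ _ hdvd with hc | hc
    · have h1 := degree_le_of_dvd hc hmapE
      have h2 : (E₀.map (Int.castRingHom (ZMod p))).degree < (φ.map (Int.castRingHom (ZMod p))).degree := by
        rw [hdegφ]
        exact lt_of_le_of_lt degree_map_le hE₀deg
      exact absurd h1 (not_le.2 h2)
    · have h1 := degree_le_of_dvd hc hmapF
      have h2 : (F₀.map (Int.castRingHom (ZMod p))).degree < (φ.map (Int.castRingHom (ZMod p))).degree := by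
        rw [hdegφ]
        exact lt_of_le_of_lt degree_map_le hF₀deg
      exact absurd h1 (not_le.2 h2)
  have hmapmod : ((E₀ * F₀) %ₘ φ).map (Int.castRingHom (ZMod p)) ≠ 0 := by
    rw [map_modByMonic _ hφ, Polynomial.map_mul]
    rw [Ne, modByMonic_eq_zero_iff_dvd hφm]
    exact hndvd
  have hmod0 : nu p ((E₀ * F₀) %ₘ φ) = 0 := by
    by_contra h0
    have h1 : (1 : ℕ∞) ≤ nu p ((E₀ * F₀) %ₘ φ) := ENat.one_le_iff_ne_zero.2 h0
    rw [one_le_nu_iff p hp] at h1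
    exact hmapmod h1
  have hCn : C ((p : ℤ) ^ (a + b)) = C (((p ^ (a + b) : ℕ) : ℤ)) := by push_cast; ring_nf
  rw [hCn, nu_C_mul p hp _ (pow_ne_zero _ hp.pos.ne') _, hmod0, hnuE, hnuF,
    Nat.Prime.factorization_pow hp]
  simp [add_comm]


/-! ### weights -/

lemma dig_eq_zero_of_natDegree_lt (φ : Polynomial ℤ) (hφ : φ.Monic) (P : Polynomial ℤ)
    (r : ℕ) (h : P.natDegree < r * φ.natDegree) : dig φ P r = 0 := by
  apply dig_eq_zero_of_lt φ hφ
  have h1 : (φ ^ r).degree = ((r * φ.natDegree : ℕ) : WithBot ℕ) := by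
    rw [degree_eq_natDegree (hφ.pow r).ne_zero, hφ.natDegree_pow]
  rw [h1]
  exact lt_of_le_of_lt degree_le_natDegree (by exact_mod_cast h)

lemma natDegree_dig_le (φ : Polynomial ℤ) (hφ : φ.Monic) (hd : 0 < φ.natDegree)
    (P : Polynomial ℤ) (r : ℕ) : (dig φ P r).natDegree ≤ φ.natDegree - 1 := by
  rcases eq_or_ne (dig φ P r) 0 with h | h
  · rw [h]; simp
  · have := natDegree_lt_natDegree h (degree_dig_lt φ hφ P r)
    omega

noncomputable def Wt (p k : ℕ) (φ P : Polynomial ℤ) (r : ℕ) : ℕ∞ :=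
  (k : ℕ∞) * nu p (dig φ P r) + r

def IsLastMin (p k : ℕ) (φ P : Polynomial ℤ) (r₀ : ℕ) : Prop :=
  (∀ r, Wt p k φ P r₀ ≤ Wt p k φ P r) ∧ ∀ r, r₀ < r → Wt p k φ P r₀ < Wt p k φ P r

lemma self_le_Wt (p k : ℕ) (φ P : Polynomial ℤ) (r : ℕ) : (r : ℕ∞) ≤ Wt p k φ P r :=
  le_add_self

lemma Wt_ne_top_iff (p k : ℕ) (hk : k ≠ 0) (φ P : Polynomial ℤ) (r : ℕ) :
    Wt p k φ P r ≠ ⊤ ↔ dig φ P r ≠ 0 := by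
  rw [Wt]
  constructor
  · intro h hc
    rw [hc, nu_zero] at h
    apply h
    rw [ENat.mul_top (by exact_mod_cast hk)]
    rfl
  · intro h
    have h1 : nu p (dig φ P r) ≠ ⊤ := (nu_eq_top_iff _ _).not.2 h
    exact WithTop.add_ne_top.2 ⟨WithTop.mul_ne_top (WithTop.coe_ne_top) h1, WithTop.coe_ne_top⟩

lemma exists_lastMin (p k : ℕ) (hk : k ≠ 0) (φ : Polynomial ℤ) (hφ : φ.Monic)
    (hd : 0 < φ.natDegree) (P : Polynomial ℤ) (hP : P ≠ 0) :
    ∃ r₀, IsLastMin p k φ P r₀ ∧ Wt p k φ P r₀ ≠ ⊤ := by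
  classical
  obtain ⟨M, hM, -, -⟩ := exists_top_dig φ hφ hd P hP
  have hMfin : Wt p k φ P M ≠ ⊤ := (Wt_ne_top_iff p k hk φ P M).2 hM
  set N := (Wt p k φ P M).toNat with hN
  have hMN : Wt p k φ P M = (N : ℕ∞) := (ENat.coe_toNat hMfin).symm
  have hMleN : M ≤ N := by
    have := self_le_Wt p k φ P M
    rw [hMN] at this
    exact_mod_cast this
  have hbig : ∀ r, N < r → (N : ℕ∞) < Wt p k φ P r := fun r hr =>
    lt_of_lt_of_le (by exact_mod_cast hr) (self_le_Wt p k φ P r)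
  obtain ⟨r₁, hr₁mem, hr₁min⟩ := Finset.exists_min_image (Finset.range (N + 1))
    (Wt p k φ P) ⟨M, by simp; omega⟩
  have hmin : ∀ r, Wt p k φ P r₁ ≤ Wt p k φ P r := by
    intro r
    by_cases hrN : r ≤ N
    · exact hr₁min r (by simp; omega)
    · push_neg at hrN
      refine le_trans (le_trans (hr₁min M (by simp; omega)) ?_) (hbig r hrN).le
      rw [hMN]
  set m := Wt p k φ P r₁ with hm
  have hmfin : m ≠ ⊤ := fun hc => hMfin (top_le_iff.1 (hc ▸ hmin M))
  have hr₁N : r₁ ≤ N := by have := Finset.mem_range.1 hr₁mem; omega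
  set r₀ := Nat.findGreatest (fun r => Wt p k φ P r = m) N with hr₀
  have hr₀spec : Wt p k φ P r₀ = m :=
    Nat.findGreatest_spec (P := fun r => Wt p k φ P r = m) hr₁N rfl
  refine ⟨r₀, ⟨fun r => hr₀spec ▸ hmin r, fun r hr => ?_⟩, by rw [hr₀spec]; exact hmfin⟩
  rw [hr₀spec]
  by_cases hrN : r ≤ N
  · have hne : Wt p k φ P r ≠ m :=
      Nat.findGreatest_is_greatest hr hrN
    exact lt_of_le_of_ne (hmin r) (Ne.symm hne)
  · push_neg at hrN
    refine lt_of_le_of_lt ?_ (hbig r hrN)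
    rw [← hMN]
    exact hmin M

lemma le_k_nu_sum (p k : ℕ) (hp : p.Prime) (hk : k ≠ 0) {α : Type} [DecidableEq α]
    (s : Finset α) (f : α → Polynomial ℤ) (c : ℕ∞) (t : ℕ)
    (h : ∀ i ∈ s, c ≤ (k : ℕ∞) * nu p (f i) + t) :
    c ≤ (k : ℕ∞) * nu p (∑ i ∈ s, f i) + t := by
  induction s using Finset.induction with
  | empty =>
    rw [Finset.sum_empty, nu_zero, ENat.mul_top (by exact_mod_cast hk)]
    exact le_top.trans le_self_add
  | insert y s' hx ih =>
    rw [Finset.sum_insert hx]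
    have h1 := h y (Finset.mem_insert_self _ _)
    have h2 := ih fun i hi => h i (Finset.mem_insert_of_mem hi)
    rcases le_total (nu p (f y)) (nu p (∑ i ∈ s', f i)) with hle | hle
    · have hmin := min_le_nu_add p hp (f y) (∑ i ∈ s', f i)
      rw [min_eq_left hle] at hmin
      exact le_trans h1 (add_le_add_left (mul_le_mul_right hmin _) _)
    · have hmin := min_le_nu_add p hp (f y) (∑ i ∈ s', f i)
      rw [min_eq_right hle] at hmin
      exact le_trans h2 (add_le_add_left (mul_le_mul_right hmin _) _)

lemma arith_gt (k : ℕ) (hk : k ≠ 0) (μ x : ℕ∞) (t : ℕ) (hμ : μ ≠ ⊤)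
    (h : (k : ℕ∞) * μ + t + 1 ≤ (k : ℕ∞) * x + t) : μ < x := by
  by_contra hc
  push_neg at hc
  have h2 : (k : ℕ∞) * x + (t : ℕ∞) ≤ (k : ℕ∞) * μ + t :=
    add_le_add_left (mul_le_mul_right hc _) _
  have hfin : (k : ℕ∞) * μ + (t : ℕ∞) ≠ ⊤ :=
    WithTop.add_ne_top.2 ⟨WithTop.mul_ne_top WithTop.coe_ne_top hμ, WithTop.coe_ne_top⟩
  have h3 : (k : ℕ∞) * μ + (t : ℕ∞) < (k : ℕ∞) * μ + t + 1 :=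
    (ENat.lt_add_one_iff hfin).2 le_rfl
  exact absurd (h.trans h2) (not_le.2 h3)

lemma core (p k : ℕ) (hp : p.Prime) (hk : 1 ≤ k) (φ : Polynomial ℤ) (hφ : φ.Monic)
    (hd : 0 < φ.natDegree) (hirr : Irreducible (φ.map (Int.castRingHom (ZMod p))))
    (P Q : Polynomial ℤ) (hP : P ≠ 0) (hQ : Q ≠ 0) (r₀ s₀ : ℕ)
    (hr : IsLastMin p k φ P r₀) (hs : IsLastMin p k φ Q s₀)
    (hrf : Wt p k φ P r₀ ≠ ⊤) (hsf : Wt p k φ Q s₀ ≠ ⊤) :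
    Wt p k φ (P * Q) (r₀ + s₀) = Wt p k φ P r₀ + Wt p k φ Q s₀ ∧
    (∀ t, Wt p k φ P r₀ + Wt p k φ Q s₀ ≤ Wt p k φ (P * Q) t) ∧
    (∀ t, r₀ + s₀ < t → Wt p k φ P r₀ + Wt p k φ Q s₀ < Wt p k φ (P * Q) t) := by
  classical
  have hk0 : k ≠ 0 := by omega
  set d := φ.natDegree with hdd
  set A := P.natDegree with hA
  set B := Q.natDegree with hB
  have hAd : P.natDegree < (A + 1) * d := by
    calc P.natDegree < A + 1 := by omega
    _ ≤ (A + 1) * d := Nat.le_mul_of_pos_right _ hd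
  have hBd : Q.natDegree < (B + 1) * d := by
    calc Q.natDegree < B + 1 := by omega
    _ ≤ (B + 1) * d := Nat.le_mul_of_pos_right _ hd
  -- lifted polynomials
  set PY : Polynomial (Polynomial ℤ) :=
    ∑ r ∈ range (A + 1), Polynomial.C (dig φ P r) * Polynomial.X ^ r with hPY
  set QY : Polynomial (Polynomial ℤ) :=
    ∑ r ∈ range (B + 1), Polynomial.C (dig φ Q r) * Polynomial.X ^ r with hQY
  have hcoeff : ∀ (R : Polynomial ℤ) (RR : ℕ) (hR : R.natDegree < (RR + 1) * d) (r : ℕ),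
      (∑ i ∈ range (RR + 1), Polynomial.C (dig φ R i) * Polynomial.X ^ i).coeff r
        = dig φ R r := by
    intro R RR hR r
    rw [finset_sum_coeff]
    simp only [coeff_C_mul, coeff_X_pow, mul_ite, mul_one, mul_zero]
    rw [Finset.sum_ite_eq (range (RR + 1)) r (fun i => dig φ R i)]
    by_cases hmem : r ∈ range (RR + 1)
    · rw [if_pos hmem]
    · rw [if_neg hmem]
      symm
      apply dig_eq_zero_of_natDegree_lt φ hφ
      simp only [Finset.mem_range, not_lt] at hmem
      calc R.natDegree < (RR + 1) * d := hR
      _ ≤ r * d := Nat.mul_le_mul_right _ (by omega)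
  have hPYc : ∀ r, PY.coeff r = dig φ P r := fun r => hcoeff P A hAd r
  have hQYc : ∀ r, QY.coeff r = dig φ Q r := fun r => hcoeff Q B hBd r
  have hPYdeg : PY.natDegree ≤ A :=
    natDegree_sum_le_of_forall_le _ _ fun i hi => by
      refine le_trans (natDegree_mul_le) ?_
      simp only [natDegree_C, natDegree_X_pow, zero_add]
      exact Nat.lt_succ_iff.1 (Finset.mem_range.1 hi)
  have hQYdeg : QY.natDegree ≤ B :=
    natDegree_sum_le_of_forall_le _ _ fun i hi => by
      refine le_trans (natDegree_mul_le) ?_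
      simp only [natDegree_C, natDegree_X_pow, zero_add]
      exact Nat.lt_succ_iff.1 (Finset.mem_range.1 hi)
  have hPeval : Polynomial.eval φ PY = P := by
    rw [hPY, eval_finset_sum]
    simp only [eval_mul, eval_pow, eval_C, eval_X]
    exact dig_sum_eq φ hφ hd P A hAd
  have hQeval : Polynomial.eval φ QY = Q := by
    rw [hQY, eval_finset_sum]
    simp only [eval_mul, eval_pow, eval_C, eval_X]
    exact dig_sum_eq φ hφ hd Q B hBd
  set D : ℕ → Polynomial ℤ := fun t => (PY * QY).coeff t with hD
  have hDanti : ∀ t, D t = ∑ x ∈ Finset.HasAntidiagonal.antidiagonal t, dig φ P x.1 * dig φ Q x.2 := by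
    intro t
    simp only [hD]
    rw [coeff_mul]
    exact Finset.sum_congr rfl fun x _ => by rw [hPYc, hQYc]
  have hPQdeg : (PY * QY).natDegree < A + B + 1 :=
    Nat.lt_succ_of_le (le_trans natDegree_mul_le (by omega))
  have hPQ : P * Q = ∑ t ∈ range (A + B + 1), D t * φ ^ t := by
    rw [← hPeval, ← hQeval, ← eval_mul]
    exact eval_eq_sum_range' hPQdeg φ
  -- carries
  set carry : ℕ → Polynomial ℤ := fun t => Nat.casesOn t 0 (fun u => D u /ₘ φ) with hcarry
  set G : ℕ → Polynomial ℤ := fun t => D t %ₘ φ + carry t with hG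
  have hsplit : P * Q = ∑ t ∈ range (A + B + 2), G t * φ ^ t := by
    have e1 : ∑ t ∈ range (A + B + 2), G t * φ ^ t
        = (∑ t ∈ range (A + B + 2), (D t %ₘ φ) * φ ^ t)
          + ∑ t ∈ range (A + B + 2), carry t * φ ^ t := by
      rw [← Finset.sum_add_distrib]
      exact Finset.sum_congr rfl fun t _ => by rw [hG]; ring
    have e2 : ∑ t ∈ range (A + B + 2), carry t * φ ^ t
        = ∑ u ∈ range (A + B + 1), (D u /ₘ φ) * φ ^ (u + 1) := by
      rw [Finset.sum_range_succ']
      simp only [hcarry]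
      simp
    have e3 : D (A + B + 1) = 0 := by
      simp only [hD]
      exact coeff_eq_zero_of_natDegree_lt hPQdeg
    have e4 : ∑ t ∈ range (A + B + 2), (D t %ₘ φ) * φ ^ t
        = ∑ t ∈ range (A + B + 1), (D t %ₘ φ) * φ ^ t := by
      rw [Finset.sum_range_succ, e3, zero_modByMonic, zero_mul, add_zero]
    rw [e1, e2, e4, hPQ, ← Finset.sum_add_distrib]
    refine Finset.sum_congr rfl fun t _ => ?_
    have := modByMonic_add_div (D t) φ
    calc D t * φ ^ t = (D t %ₘ φ + φ * (D t /ₘ φ)) * φ ^ t := by rw [this]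
    _ = D t %ₘ φ * φ ^ t + D t /ₘ φ * φ ^ (t + 1) := by rw [pow_succ']; ring
  have hdegG : ∀ t ≤ A + B + 1, (G t).degree < φ.degree := by
    intro t _
    rw [hG]
    have h1 : (D t %ₘ φ).degree < φ.degree := degree_modByMonic_lt _ hφ
    have h2 : (carry t).degree < φ.degree := by
      rcases t with _ | u
      · simp only [hcarry]
        rw [degree_eq_natDegree hφ.ne_zero]
        exact lt_of_le_of_lt bot_le (by exact_mod_cast WithBot.bot_lt_coe d)
      · simp only [hcarry]
        have hDdeg : (D u).natDegree ≤ 2 * d - 2 := by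
          rw [hDanti]
          refine natDegree_sum_le_of_forall_le _ _ fun x _ => ?_
          refine le_trans natDegree_mul_le ?_
          have := natDegree_dig_le φ hφ hd P x.1
          have := natDegree_dig_le φ hφ hd Q x.2
          omega
        rcases eq_or_ne (D u /ₘ φ) 0 with hz | hz
        · rw [hz, degree_zero, degree_eq_natDegree hφ.ne_zero]
          exact lt_of_le_of_lt bot_le (by exact_mod_cast WithBot.bot_lt_coe d)
        · have : (D u /ₘ φ).natDegree < d := by
            rw [natDegree_divByMonic _ hφ]
            omega
          rw [degree_eq_natDegree hz, degree_eq_natDegree hφ.ne_zero]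
          exact_mod_cast this
    exact lt_of_le_of_lt (degree_add_le _ _) (max_lt h1 h2)
  have hdigPQ : ∀ t, dig φ (P * Q) t = if t ≤ A + B + 1 then G t else 0 := by
    intro t
    have := dig_eq_of_expansion φ hφ hd G (A + B + 1) hdegG t
    rw [← hsplit] at this
    exact this
  -- weights
  set w₀ := Wt p k φ P r₀ + Wt p k φ Q s₀ with hw₀
  have hw₀fin : w₀ ≠ ⊤ := WithTop.add_ne_top.2 ⟨hrf, hsf⟩
  have keypair : ∀ r s : ℕ, (k : ℕ∞) * nu p (dig φ P r * dig φ Q s) + ((r + s : ℕ) : ℕ∞)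
      = Wt p k φ P r + Wt p k φ Q s := by
    intro r s
    rw [nu_mul p hp, Wt, Wt]
    push_cast
    ring
  have hDb : ∀ t, w₀ ≤ (k : ℕ∞) * nu p (D t) + t := by
    intro t
    rw [hDanti]
    refine le_k_nu_sum p k hp hk0 _ _ _ _ fun x hx => ?_
    have hxt : x.1 + x.2 = t := Finset.HasAntidiagonal.mem_antidiagonal.1 hx
    rw [← hxt]
    rw [keypair x.1 x.2]
    exact add_le_add (hr.1 x.1) (hs.1 x.2)
  have hDbStrict : ∀ t, r₀ + s₀ < t → w₀ + 1 ≤ (k : ℕ∞) * nu p (D t) + t := by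
    intro t ht
    rw [hDanti]
    refine le_k_nu_sum p k hp hk0 _ _ _ _ fun x hx => ?_
    have hxt : x.1 + x.2 = t := Finset.HasAntidiagonal.mem_antidiagonal.1 hx
    rw [← hxt, keypair x.1 x.2]
    have hcase : r₀ < x.1 ∨ s₀ < x.2 := by omega
    rcases hcase with hc | hc
    · calc w₀ + 1 = (Wt p k φ P r₀ + 1) + Wt p k φ Q s₀ := by rw [hw₀]; ring
      _ ≤ Wt p k φ P x.1 + Wt p k φ Q x.2 :=
          add_le_add (Order.add_one_le_of_lt (hr.2 x.1 hc)) (hs.1 x.2)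
    · calc w₀ + 1 = Wt p k φ P r₀ + (Wt p k φ Q s₀ + 1) := by rw [hw₀]; ring
      _ ≤ Wt p k φ P x.1 + Wt p k φ Q x.2 :=
          add_le_add (hr.1 x.1) (Order.add_one_le_of_lt (hs.2 x.2 hc))
  have hCarryStrict : ∀ t, 1 ≤ t → w₀ + 1 ≤ (k : ℕ∞) * nu p (carry t) + t := by
    intro t ht
    obtain ⟨u, rfl⟩ : ∃ u, t = u + 1 := ⟨t - 1, by omega⟩
    have h1 : nu p (D u) ≤ nu p (carry (u + 1)) := nu_le_divByMonic p hp φ hφ (D u)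
    calc w₀ + 1 ≤ ((k : ℕ∞) * nu p (D u) + u) + 1 := add_le_add_left (hDb u) _
    _ ≤ ((k : ℕ∞) * nu p (carry (u + 1)) + u) + 1 :=
        add_le_add_left (add_le_add_left (mul_le_mul_right h1 _) _) _
    _ = (k : ℕ∞) * nu p (carry (u + 1)) + ((u + 1 : ℕ) : ℕ∞) := by push_cast; ring
  have hGb : ∀ t, t ≤ A + B + 1 → w₀ ≤ (k : ℕ∞) * nu p (G t) + t := by
    intro t _
    simp only [hG]
    have hmin := min_le_nu_add p hp (D t %ₘ φ) (carry t)
    have h1 : w₀ ≤ (k : ℕ∞) * nu p (D t %ₘ φ) + t :=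
      le_trans (hDb t) (add_le_add_left (mul_le_mul_right (nu_le_modByMonic p hp φ hφ _) _) _)
    have h2 : w₀ ≤ (k : ℕ∞) * nu p (carry t) + t := by
      rcases Nat.eq_zero_or_pos t with rfl | ht
      · have hc0 : carry 0 = 0 := rfl
        rw [hc0, nu_zero, ENat.mul_top (by exact_mod_cast hk0)]
        exact le_top.trans le_self_add
      · exact le_trans le_self_add (hCarryStrict t ht)
    rcases le_total (nu p (D t %ₘ φ)) (nu p (carry t)) with hle | hle
    · rw [min_eq_left hle] at hmin
      exact le_trans h1 (add_le_add_left (mul_le_mul_right hmin _) _)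
    · rw [min_eq_right hle] at hmin
      exact le_trans h2 (add_le_add_left (mul_le_mul_right hmin _) _)
  have hWb : ∀ t, w₀ ≤ Wt p k φ (P * Q) t := by
    intro t
    rw [Wt, hdigPQ t]
    by_cases htle : t ≤ A + B + 1
    · rw [if_pos htle]; exact hGb t htle
    · rw [if_neg htle, nu_zero, ENat.mul_top (by exact_mod_cast hk0)]
      exact le_top.trans le_self_add
  have hWstrict : ∀ t, r₀ + s₀ < t → w₀ + 1 ≤ Wt p k φ (P * Q) t := by
    intro t ht
    rw [Wt, hdigPQ t]
    by_cases htle : t ≤ A + B + 1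
    · rw [if_pos htle]
      simp only [hG]
      have h1 : w₀ + 1 ≤ (k : ℕ∞) * nu p (D t %ₘ φ) + t :=
        le_trans (hDbStrict t ht)
          (add_le_add_left (mul_le_mul_right (nu_le_modByMonic p hp φ hφ _) _) _)
      have h2 : w₀ + 1 ≤ (k : ℕ∞) * nu p (carry t) + t := hCarryStrict t (by omega)
      have hmin := min_le_nu_add p hp (D t %ₘ φ) (carry t)
      rcases le_total (nu p (D t %ₘ φ)) (nu p (carry t)) with hle | hle
      · rw [min_eq_left hle] at hmin
        exact le_trans h1 (add_le_add_left (mul_le_mul_right hmin _) _)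
      · rw [min_eq_right hle] at hmin
        exact le_trans h2 (add_le_add_left (mul_le_mul_right hmin _) _)
    · rw [if_neg htle, nu_zero, ENat.mul_top (by exact_mod_cast hk0)]
      exact le_top.trans le_self_add
  -- equality at t₀ := r₀ + s₀
  have hr₀A : r₀ ≤ A := by
    have hne : dig φ P r₀ ≠ 0 := (Wt_ne_top_iff p k hk0 φ P r₀).1 hrf
    by_contra hcon
    push_neg at hcon
    exact hne (dig_eq_zero_of_natDegree_lt φ hφ P r₀
      (lt_of_lt_of_le (by omega) (Nat.le_mul_of_pos_right _ hd)))
  have hs₀B : s₀ ≤ B := by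
    have hne : dig φ Q s₀ ≠ 0 := (Wt_ne_top_iff p k hk0 φ Q s₀).1 hsf
    by_contra hcon
    push_neg at hcon
    exact hne (dig_eq_zero_of_natDegree_lt φ hφ Q s₀
      (lt_of_lt_of_le (by omega) (Nat.le_mul_of_pos_right _ hd)))
  set t₀ := r₀ + s₀ with ht₀
  have ht₀le : t₀ ≤ A + B + 1 := by omega
  set μE := nu p (dig φ P r₀) with hμE
  set μF := nu p (dig φ Q s₀) with hμF
  have hμEfin : μE ≠ ⊤ := (nu_eq_top_iff _ _).not.2 ((Wt_ne_top_iff p k hk0 φ P r₀).1 hrf)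
  have hμFfin : μF ≠ ⊤ := (nu_eq_top_iff _ _).not.2 ((Wt_ne_top_iff p k hk0 φ Q s₀).1 hsf)
  have hμfin : μE + μF ≠ ⊤ := WithTop.add_ne_top.2 ⟨hμEfin, hμFfin⟩
  have hw₀eq : w₀ = (k : ℕ∞) * (μE + μF) + ((t₀ : ℕ) : ℕ∞) := by
    rw [hw₀, Wt, Wt, ← hμE, ← hμF, ht₀]
    push_cast
    ring
  have hmain : nu p ((dig φ P r₀ * dig φ Q s₀) %ₘ φ) = μE + μF :=
    nu_mul_modByMonic p hp φ hφ hirr _ _ (degree_dig_lt φ hφ P r₀) (degree_dig_lt φ hφ Q s₀)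
  have hmem : (r₀, s₀) ∈ Finset.HasAntidiagonal.antidiagonal t₀ := Finset.HasAntidiagonal.mem_antidiagonal.2 rfl
  set X := ∑ x ∈ (Finset.HasAntidiagonal.antidiagonal t₀).erase (r₀, s₀), dig φ P x.1 * dig φ Q x.2 with hX
  have hDt₀ : D t₀ = dig φ P r₀ * dig φ Q s₀ + X := by
    rw [hDanti, hX, Finset.add_sum_erase _ (fun x => dig φ P x.1 * dig φ Q x.2) hmem]
  have hXb : w₀ + 1 ≤ (k : ℕ∞) * nu p X + t₀ := by
    rw [hX]
    refine le_k_nu_sum p k hp hk0 _ _ _ _ fun x hx => ?_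
    obtain ⟨hxne, hxmem⟩ := Finset.mem_erase.1 hx
    have hxt : x.1 + x.2 = t₀ := Finset.HasAntidiagonal.mem_antidiagonal.1 hxmem
    have hcase : r₀ < x.1 ∨ s₀ < x.2 := by
      rcases Nat.lt_trichotomy x.1 r₀ with hc | hc | hc
      · right; omega
      · exfalso
        apply hxne
        have h2 : x.2 = s₀ := by omega
        exact Prod.ext hc h2
      · left; exact hc
    rw [show ((t₀ : ℕ) : ℕ∞) = ((x.1 + x.2 : ℕ) : ℕ∞) by rw [hxt], keypair x.1 x.2]
    rcases hcase with hc | hc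
    · calc w₀ + 1 = (Wt p k φ P r₀ + 1) + Wt p k φ Q s₀ := by rw [hw₀]; ring
      _ ≤ Wt p k φ P x.1 + Wt p k φ Q x.2 :=
          add_le_add (Order.add_one_le_of_lt (hr.2 x.1 hc)) (hs.1 x.2)
    · calc w₀ + 1 = Wt p k φ P r₀ + (Wt p k φ Q s₀ + 1) := by rw [hw₀]; ring
      _ ≤ Wt p k φ P x.1 + Wt p k φ Q x.2 :=
          add_le_add (hr.1 x.1) (Order.add_one_le_of_lt (hs.2 x.2 hc))
  have hXgt : μE + μF < nu p X := by
    rw [hw₀eq] at hXb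
    exact arith_gt k hk0 _ _ t₀ hμfin hXb
  have hcarrygt : μE + μF < nu p (carry t₀) := by
    rcases Nat.eq_zero_or_pos t₀ with h0 | hpos
    · have hc0 : carry t₀ = 0 := by rw [h0]; rfl
      rw [hc0, nu_zero]
      exact Ne.lt_top hμfin
    · have hcs := hCarryStrict t₀ hpos
      rw [hw₀eq] at hcs
      exact arith_gt k hk0 _ _ t₀ hμfin hcs
  have hGt₀ : nu p (G t₀) = μE + μF := by
    simp only [hG]
    have e : D t₀ %ₘ φ = (dig φ P r₀ * dig φ Q s₀) %ₘ φ + X %ₘ φ := by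
      rw [hDt₀, add_modByMonic]
    have h1 : μE + μF < nu p (X %ₘ φ) := lt_of_lt_of_le hXgt (nu_le_modByMonic p hp φ hφ X)
    have h2 : μE + μF < nu p (X %ₘ φ + carry t₀) :=
      lt_of_lt_of_le (lt_min h1 hcarrygt) (min_le_nu_add p hp _ _)
    rw [e, add_assoc]
    rw [nu_add_eq_left p hp _ _ (by rw [hmain]; exact h2)]
    exact hmain
  have hWt₀ : Wt p k φ (P * Q) t₀ = w₀ := by
    rw [Wt, hdigPQ t₀, if_pos ht₀le, hGt₀, hw₀eq]
  refine ⟨hWt₀, hWb, fun t ht => ?_⟩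
  exact lt_of_lt_of_le ((ENat.lt_add_one_iff hw₀fin).2 le_rfl) (hWstrict t ht)

lemma key_fact (p k j : ℕ) (hp : p.Prime) (hpk : k + 2 ≤ p) (hj : 1 ≤ j) :
    k * ((j + 1).factorial.factorization p) < j := by
  haveI : Fact p.Prime := ⟨hp⟩
  set ν := (j + 1).factorial.factorization p with hν
  have hL := sub_one_mul_padicValNat_factorial (p := p) (j + 1)
  rw [← Nat.factorization_def _ hp, ← hν] at hL
  have h2 : (p - 1) * ν ≤ j + 1 := by omega
  have h1 : (k + 1) * ν ≤ (p - 1) * ν := Nat.mul_le_mul_right _ (by omega)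
  rcases Nat.lt_or_ge ν 2 with hlt | hge
  · interval_cases ν
    · omega
    · have hdvd : p ∣ (j + 1).factorial := Nat.dvd_of_factorization_pos (by omega)
      have hple : p ≤ j + 1 := (Nat.Prime.dvd_factorial hp).1 hdvd
      omega
  · have e : (k + 1) * ν = k * ν + ν := by ring
    omega

lemma nu_natmul (p : ℕ) (hp : p.Prime) (c : ℕ) (hc : c ≠ 0) (P : Polynomial ℤ) (hP : P ≠ 0)
    (hcp : ¬ ((p : ℤ) ∣ P.content)) :
    nu p (C (c : ℤ) * P) = ((c.factorization p : ℕ) : ℕ∞) := by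
  rw [nu_C_mul p hp c hc P]
  have h0 : nu p P = 0 := by
    rw [nu, if_neg hP]
    norm_cast
    apply Nat.factorization_eq_zero_of_not_dvd
    intro hdvd
    apply hcp
    rw [← Int.natAbs_dvd_natAbs, Int.natAbs_natCast]
    exact hdvd
  rw [h0, add_zero]

end NFII

open NFII

theorem no_factor_in_interval (n : ℕ) (φ : Polynomial ℤ) (hmonic : φ.Monic)
    (hirr : ∀ p : ℕ, p.Prime → p ≤ n + 1 →
      Irreducible (φ.map (Int.castRingHom (ZMod p))))
    (a : ℕ → Polynomial ℤ) (hdeg : ∀ j ≤ n, (a j).degree < φ.degree)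
    (hcont : ∀ q : ℕ, q.Prime → q ≤ n + 1 → ¬ ((q : ℤ) ∣ (a 0).content))
    (k : ℕ) (hk : 1 ≤ k) (hkn : k ≤ n / 2)
    (p : ℕ) (hp : p.Prime) (hpk : k + 2 ≤ p)
    (hdvd : p ∣ ∏ i ∈ Finset.range k, (n + 1 - i))
    (hlead : ¬ ((p : ℤ) ∣ (a n).leadingCoeff)) :
    ¬ ∃ h : Polynomial ℤ,
        (∃ g : Polynomial ℚ,
          ∑ j ∈ Finset.range (n + 1),
            C ((1 : ℚ) / (j + 1).factorial) * ((a j).map (Int.castRingHom ℚ)) *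
              (φ.map (Int.castRingHom ℚ)) ^ j
          = (h.map (Int.castRingHom ℚ)) * g) ∧
        k * φ.natDegree ≤ h.natDegree ∧ h.natDegree < (k + 1) * φ.natDegree := by
  classical
  haveI : Fact p.Prime := ⟨hp⟩
  rintro ⟨h, ⟨g, hfac⟩, hdlo, hdhi⟩
  have h2k : 2 * k ≤ n := by omega
  obtain ⟨i, hik, hpi⟩ : ∃ i ∈ Finset.range k, p ∣ (n + 1 - i) :=
    (hp.prime.dvd_finset_prod_iff _).1 hdvd
  rw [Finset.mem_range] at hik
  set m₀ := n + 1 - i with hm₀def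
  have hm₀pos : 0 < m₀ := by omega
  have hpm₀ : p ≤ m₀ := Nat.le_of_dvd hm₀pos hpi
  have hpn1 : p ≤ n + 1 := by omega
  have hm₀ge : n + 2 - k ≤ m₀ := by omega
  have hm₀le : m₀ ≤ n + 1 := by omega
  have hφirr := hirr p hp hpn1
  set d := φ.natDegree with hdef
  have hd1 : 0 < d := by
    rcases Nat.eq_zero_or_pos d with h0 | h1
    · exfalso
      have he1 : φ = 1 := hmonic.natDegree_eq_zero.1 h0
      rw [he1, Polynomial.map_one] at hφirr
      exact not_irreducible_one hφirr
    · exact h1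
  have hhne : h ≠ 0 := by
    intro h0
    rw [h0, natDegree_zero] at hdlo
    have : 1 ≤ k * d := Nat.mul_pos hk hd1
    omega
  -- the integral polynomial F
  set N := (n + 1).factorial with hNdef
  set c : ℕ → ℕ := fun j => N / (j + 1).factorial with hcdef
  have hcfac : ∀ j ≤ n, (j + 1).factorial * c j = N := by
    intro j hj
    simp only [hcdef]
    exact Nat.mul_div_cancel' (Nat.factorial_dvd_factorial (by omega))
  have hNne : N ≠ 0 := by
    rw [hNdef]; exact Nat.factorial_ne_zero _
  have hcne : ∀ j ≤ n, c j ≠ 0 := by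
    intro j hj h0
    have h1 := hcfac j hj
    rw [h0, mul_zero] at h1
    exact hNne h1.symm
  set V := N.factorization p with hVdef
  have hνle : ∀ j ≤ n, (j + 1).factorial.factorization p ≤ V := by
    intro j hj
    have hdv : (j + 1).factorial ∣ N := ⟨c j, (hcfac j hj).symm⟩
    have := (Nat.factorization_le_iff_dvd (Nat.factorial_ne_zero _) hNne).2 hdv
    exact Finsupp.le_def.1 this p
  have hcfacp : ∀ j ≤ n, (c j).factorization p = V - (j + 1).factorial.factorization p := by
    intro j hj
    have e2 : ((j + 1).factorial.factorization p) + (c j).factorization p = V := by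
      rw [hVdef, ← hcfac j hj,
        Nat.factorization_mul (Nat.factorial_ne_zero _) (hcne j hj)]
      simp
    omega
  have hV1 : 1 ≤ V := by
    have hdvN : p ∣ N := by
      rw [hNdef]
      exact Nat.dvd_factorial hp.pos hpn1
    exact hp.factorization_pos_of_dvd hNne hdvN
  have hm₀V : ∀ j, j + 1 < m₀ → (j + 1).factorial.factorization p < V := by
    intro j hjm
    have h1 : (j + 1).factorial.factorization p ≤ (m₀ - 1).factorial.factorization p := by
      have hdv : (j + 1).factorial ∣ (m₀ - 1).factorial :=
        Nat.factorial_dvd_factorial (by omega)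
      exact Finsupp.le_def.1 ((Nat.factorization_le_iff_dvd (Nat.factorial_ne_zero _)
        (Nat.factorial_ne_zero _)).2 hdv) p
    have h2 : m₀.factorial.factorization p
        = m₀.factorization p + (m₀ - 1).factorial.factorization p := by
      rw [← Nat.mul_factorial_pred hm₀pos.ne',
        Nat.factorization_mul (by omega) (Nat.factorial_ne_zero _)]
      simp
    have h3 : 1 ≤ m₀.factorization p := hp.factorization_pos_of_dvd (by omega) hpi
    have h4 : m₀.factorial.factorization p ≤ V := by
      have hdv : m₀.factorial ∣ N := by
        rw [hNdef]
        exact Nat.factorial_dvd_factorial hm₀le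
      exact Finsupp.le_def.1 ((Nat.factorization_le_iff_dvd (Nat.factorial_ne_zero _)
        hNne).2 hdv) p
    omega
  set F := ∑ j ∈ Finset.range (n + 1), C ((c j : ℤ)) * a j * φ ^ j with hFdef
  have hCa : ∀ j, (C ((c j : ℤ)) * a j).degree ≤ (a j).degree := by
    intro j
    refine le_trans (degree_mul_le _ _) ?_
    refine le_trans (add_le_add_left degree_C_le _) ?_
    rw [zero_add]
  have hBdeg : ∀ j ≤ n, (C ((c j : ℤ)) * a j).degree < φ.degree :=
    fun j hj => lt_of_le_of_lt (hCa j) (hdeg j hj)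
  have hdigF : ∀ j, dig φ F j = if j ≤ n then C ((c j : ℤ)) * a j else 0 :=
    dig_eq_of_expansion φ hmonic hd1 (fun j => C ((c j : ℤ)) * a j) n hBdeg
  have haN : a n ≠ 0 := by
    intro h0
    apply hlead
    rw [h0, leadingCoeff_zero]
    exact dvd_zero _
  have hcnn : ((c n : ℤ)) = 1 := by
    have : c n = 1 := by
      rw [hcdef]
      simp only [hNdef]
      exact Nat.div_self (Nat.factorial_pos _)
    rw [this]; rfl
  have hφnd : ∀ j : ℕ, (φ ^ j).degree = ((j * d : ℕ) : WithBot ℕ) := by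
    intro j
    rw [degree_eq_natDegree (hmonic.pow j).ne_zero, hmonic.natDegree_pow]
  have htaildeg : (C ((c n : ℤ)) * a n * φ ^ n).degree
      = (((a n).natDegree + n * d : ℕ) : WithBot ℕ) := by
    rw [hcnn, C_1, one_mul, degree_mul, hφnd n, degree_eq_natDegree haN]
    push_cast
    ring
  have hheaddeg : (∑ j ∈ Finset.range n, C ((c j : ℤ)) * a j * φ ^ j).degree
      < ((n * d : ℕ) : WithBot ℕ) := by
    refine lt_of_le_of_lt (degree_sum_le _ _) ?_
    rw [Finset.sup_lt_iff (by exact_mod_cast WithBot.bot_lt_coe (n * d))]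
    intro j hj
    rw [Finset.mem_range] at hj
    have h1 : (C ((c j : ℤ)) * a j * φ ^ j).degree ≤ (a j).degree + ((j * d : ℕ) : WithBot ℕ) := by
      refine le_trans (degree_mul_le _ _) ?_
      rw [hφnd j]
      exact add_le_add_left (hCa j) _
    refine lt_of_le_of_lt h1 ?_
    have h2 : (a j).degree + ((j * d : ℕ) : WithBot ℕ) < ((d : ℕ) : WithBot ℕ) + ((j * d : ℕ) : WithBot ℕ) := by
      refine WithBot.add_lt_add_right (by exact_mod_cast (WithBot.coe_ne_bot)) ?_
      refine lt_of_lt_of_le (hdeg j (by omega)) ?_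
      rw [degree_eq_natDegree hmonic.ne_zero]
    refine lt_of_lt_of_le h2 ?_
    rw [show ((d : ℕ) : WithBot ℕ) + ((j * d : ℕ) : WithBot ℕ) = (((j + 1) * d : ℕ) : WithBot ℕ) by
      push_cast; ring]
    exact_mod_cast Nat.mul_le_mul_right d (by omega)
  have hFsplit : F = (∑ j ∈ Finset.range n, C ((c j : ℤ)) * a j * φ ^ j)
      + C ((c n : ℤ)) * a n * φ ^ n := Finset.sum_range_succ _ n
  have hheadlt : (∑ j ∈ Finset.range n, C ((c j : ℤ)) * a j * φ ^ j).degree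
      < (C ((c n : ℤ)) * a n * φ ^ n).degree := by
    rw [htaildeg]
    refine lt_of_lt_of_le hheaddeg ?_
    exact_mod_cast Nat.le_add_left _ _
  have hFdeg : F.degree = (((a n).natDegree + n * d : ℕ) : WithBot ℕ) := by
    rw [hFsplit, degree_add_eq_right_of_degree_lt hheadlt, htaildeg]
  have hFlead : F.leadingCoeff = (a n).leadingCoeff := by
    rw [hFsplit, leadingCoeff_add_of_degree_lt hheadlt, hcnn, C_1, one_mul,
      leadingCoeff_mul, (hmonic.pow n).leadingCoeff, mul_one]
  have hFne : F ≠ 0 := by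
    intro h0
    apply haN
    rw [← leadingCoeff_eq_zero, ← hFlead, h0, leadingCoeff_zero]
  have hFnat : F.natDegree = (a n).natDegree + n * d := natDegree_eq_of_degree_eq_some hFdeg
  have haNdeg : (a n).natDegree < d := natDegree_lt_natDegree haN (hdeg n le_rfl)
  -- map to ℚ and Gauss
  have hFmapQ : F.map (Int.castRingHom ℚ) = (h.map (Int.castRingHom ℚ)) * (C ((N : ℚ)) * g) := by
    have e1 : F.map (Int.castRingHom ℚ)
        = ∑ j ∈ Finset.range (n + 1), C (((c j : ℕ) : ℚ))
            * ((a j).map (Int.castRingHom ℚ)) * ((φ.map (Int.castRingHom ℚ))) ^ j := by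
      rw [hFdef, Polynomial.map_sum]
      refine Finset.sum_congr rfl fun j hj => ?_
      rw [Polynomial.map_mul, Polynomial.map_mul, Polynomial.map_pow, map_C]
      norm_cast
    have e2 : ∀ j ∈ Finset.range (n + 1), ((c j : ℕ) : ℚ)
        = (N : ℚ) * ((1 : ℚ) / (j + 1).factorial) := by
      intro j hj
      rw [Finset.mem_range] at hj
      have hdv : (j + 1).factorial ∣ N := ⟨c j, (hcfac j (by omega)).symm⟩
      rw [hcdef]
      rw [Nat.cast_div hdv (by exact_mod_cast Nat.factorial_ne_zero (j + 1))]
      rw [div_eq_mul_one_div]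
    calc F.map (Int.castRingHom ℚ)
        = ∑ j ∈ Finset.range (n + 1), C (((c j : ℕ) : ℚ))
            * ((a j).map (Int.castRingHom ℚ)) * ((φ.map (Int.castRingHom ℚ))) ^ j := e1
      _ = C ((N : ℚ)) * ∑ j ∈ Finset.range (n + 1),
            C ((1 : ℚ) / (j + 1).factorial) * ((a j).map (Int.castRingHom ℚ))
              * (φ.map (Int.castRingHom ℚ)) ^ j := by
          rw [Finset.mul_sum]
          refine Finset.sum_congr rfl fun j hj => ?_
          rw [e2 j hj, C_mul]
          ring
      _ = (h.map (Int.castRingHom ℚ)) * (C ((N : ℚ)) * g) := by rw [hfac]; ring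
  have hdvd1 : (h.primPart).map (Int.castRingHom ℚ) ∣ F.map (Int.castRingHom ℚ) := by
    refine dvd_trans (Polynomial.map_dvd _ (primPart_dvd h)) ?_
    exact ⟨C ((N : ℚ)) * g, hFmapQ⟩
  have hFCne : ((F.content : ℚ)) ≠ 0 := by
    rw [Int.cast_ne_zero]
    exact content_eq_zero_iff.not.2 hFne
  have e3 : F.map (Int.castRingHom ℚ)
      = C ((F.content : ℚ)) * F.primPart.map (Int.castRingHom ℚ) := by
    conv_lhs => rw [F.eq_C_content_mul_primPart]
    rw [Polynomial.map_mul, map_C, eq_intCast]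
  have hdvd2 : (h.primPart).map (Int.castRingHom ℚ) ∣ F.primPart.map (Int.castRingHom ℚ) := by
    have hstep : (h.primPart).map (Int.castRingHom ℚ)
        ∣ C ((F.content : ℚ)) * F.primPart.map (Int.castRingHom ℚ) := by
      rw [← e3]
      exact hdvd1
    obtain ⟨w, hw⟩ := hstep
    refine ⟨C ((F.content : ℚ))⁻¹ * w, ?_⟩
    have hcl : C ((F.content : ℚ))⁻¹ * (C ((F.content : ℚ)) * F.primPart.map (Int.castRingHom ℚ))
        = F.primPart.map (Int.castRingHom ℚ) := by
      rw [← mul_assoc, ← C_mul, inv_mul_cancel₀ hFCne, C_1, one_mul]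
    rw [← hcl, hw]
    ring
  have hdvdZ : h.primPart ∣ F := by
    refine dvd_trans ?_ (primPart_dvd F)
    refine (isPrimitive_primPart h).dvd_of_fraction_map_dvd_fraction_map (K := ℚ)
      ?_
    rw [algebraMap_int_eq]
    exact hdvd2
  obtain ⟨G₁, hFfac⟩ := hdvdZ
  set h₁ := h.primPart with hh₁def
  have hh₁ne : h₁ ≠ 0 := primPart_ne_zero h
  have hh₁deg : h₁.natDegree = h.natDegree := natDegree_primPart h
  have hG₁ne : G₁ ≠ 0 := by
    rintro rfl
    rw [mul_zero] at hFfac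
    exact hFne hFfac
  have hdegsum : h₁.natDegree + G₁.natDegree = F.natDegree := by
    rw [hFfac, natDegree_mul hh₁ne hG₁ne]
  have hleadmul : h₁.leadingCoeff * G₁.leadingCoeff = (a n).leadingCoeff := by
    rw [← hFlead, hFfac, leadingCoeff_mul]
  have hh₁lead : ¬ ((p : ℤ) ∣ h₁.leadingCoeff) := by
    intro hdl
    exact hlead (hleadmul ▸ hdl.mul_right _)
  -- mod p analysis
  have hφbm : (φ.map (Int.castRingHom (ZMod p))).Monic := hmonic.map _
  have hφbd : (φ.map (Int.castRingHom (ZMod p))).natDegree = d := hmonic.natDegree_map _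
  have hFbne : F.map (Int.castRingHom (ZMod p)) ≠ 0 := by
    intro h0
    have hco := congrArg (fun q => Polynomial.coeff q F.natDegree) h0
    simp only [coeff_map, coeff_zero] at hco
    apply hlead
    rw [← hFlead]
    rw [← ZMod.intCast_zmod_eq_zero_iff_dvd]
    have hco' : ((F.coeff F.natDegree : ℤ) : ZMod p) = 0 := by rwa [eq_intCast] at hco
    exact hco' 
  have hpowdvd : (φ.map (Int.castRingHom (ZMod p))) ^ (m₀ - 1) ∣ F.map (Int.castRingHom (ZMod p)) := by
    rw [hFdef, Polynomial.map_sum]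
    refine Finset.dvd_sum fun j hj => ?_
    rw [Finset.mem_range] at hj
    rcases Nat.lt_or_ge j (m₀ - 1) with hlt | hge
    · have hpc : p ∣ c j := by
        refine Nat.dvd_of_factorization_pos ?_
        have h5 := hcfacp j (by omega)
        have h6 := hm₀V j (by omega)
        omega
      have hzero : (Int.castRingHom (ZMod p)) ((c j : ℤ)) = 0 := by
        rw [eq_intCast]
        push_cast
        rw [ZMod.natCast_eq_zero_iff]
        exact hpc
      rw [Polynomial.map_mul, Polynomial.map_mul, map_C, hzero, C_0, zero_mul, zero_mul]
      exact dvd_zero _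
    · rw [Polynomial.map_mul, Polynomial.map_pow]
      exact dvd_mul_of_dvd_right (pow_dvd_pow _ (by omega)) _
  have hbar : φ.map (Int.castRingHom (ZMod p)) ∣ h₁.map (Int.castRingHom (ZMod p)) := by
    by_contra hnd
    have hFb : F.map (Int.castRingHom (ZMod p))
        = h₁.map (Int.castRingHom (ZMod p)) * G₁.map (Int.castRingHom (ZMod p)) := by
      rw [hFfac, Polynomial.map_mul]
    have hprime : Prime (φ.map (Int.castRingHom (ZMod p))) :=
      UniqueFactorizationMonoid.irreducible_iff_prime.1 hφirr
    have hdvdG : (φ.map (Int.castRingHom (ZMod p))) ^ (m₀ - 1)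
        ∣ G₁.map (Int.castRingHom (ZMod p)) :=
      hprime.pow_dvd_of_dvd_mul_left _ hnd (hFb ▸ hpowdvd)
    have hGbne : G₁.map (Int.castRingHom (ZMod p)) ≠ 0 := by
      intro h0
      apply hFbne
      rw [hFb, h0, mul_zero]
    have hdlb : (m₀ - 1) * d ≤ G₁.natDegree := by
      have h7 := natDegree_le_of_dvd hdvdG hGbne
      rw [hφbm.natDegree_pow, hφbd] at h7
      exact le_trans h7 natDegree_map_le
    have e5 : (n + 1 - k) * d + k * d = (n + 1) * d := by
      rw [← Nat.add_mul]
      congr 1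
      omega
    have e6 : (n + 1) * d = n * d + d := by ring
    have h7 : (n + 1 - k) * d ≤ (m₀ - 1) * d := Nat.mul_le_mul_right _ (by omega)
    omega
  have hnu0 : (1 : ℕ∞) ≤ nu p (dig φ h₁ 0) := by
    rw [one_le_nu_iff p hp, dig_zero, map_modByMonic _ hmonic,
      modByMonic_eq_zero_iff_dvd hφbm]
    exact hbar
  -- weights of F
  have hdigF0 : dig φ F 0 = C ((c 0 : ℤ)) * a 0 := by
    have := hdigF 0
    rwa [if_pos (by omega)] at this
  have ha0ne : a 0 ≠ 0 := by
    intro h0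
    exact hcont p hp hpn1 (by rw [h0, content_zero]; exact dvd_zero _)
  have hc0 : (c 0).factorization p = V := by
    have hc0N : c 0 = N := by
      simp only [hcdef, zero_add, Nat.factorial_one, Nat.div_one]
    rw [hc0N, hVdef]
  have hnuF0 : nu p (dig φ F 0) = ((V : ℕ) : ℕ∞) := by
    rw [hdigF0, nu_natmul p hp _ (hcne 0 (by omega)) _ ha0ne (hcont p hp hpn1), hc0]
  have hWF0 : Wt p k φ F 0 = ((k * V : ℕ) : ℕ∞) := by
    rw [Wt, hnuF0]
    push_cast
    ring
  have hWFj : ∀ j, 1 ≤ j → ((k * V + 1 : ℕ) : ℕ∞) ≤ Wt p k φ F j := by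
    intro j hj
    rcases Nat.lt_or_ge n j with hgt | hle
    · have hz : dig φ F j = 0 := by
        have := hdigF j
        rwa [if_neg (by omega)] at this
      rw [Wt, hz, nu_zero, ENat.mul_top (by exact_mod_cast (show k ≠ 0 by omega))]
      exact le_top.trans le_self_add
    · have hdigj : dig φ F j = C ((c j : ℤ)) * a j := by
        have := hdigF j
        rwa [if_pos hle] at this
      rcases eq_or_ne (a j) 0 with h0 | h0
      · rw [Wt, hdigj, h0, mul_zero, nu_zero,
          ENat.mul_top (by exact_mod_cast (show k ≠ 0 by omega))]
        exact le_top.trans le_self_add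
      · have hnuj : ((V - (j + 1).factorial.factorization p : ℕ) : ℕ∞)
            ≤ nu p (dig φ F j) := by
          rw [hdigj, nu_C_mul p hp _ (hcne j hle) _, hcfacp j hle]
          exact le_self_add
        have harith : k * V + 1 ≤ k * (V - (j + 1).factorial.factorization p) + j := by
          have hkey := key_fact p k j hp hpk hj
          have hmono := hνle j hle
          have e : k * (V - (j + 1).factorial.factorization p)
              + k * ((j + 1).factorial.factorization p) = k * V := by
            rw [← Nat.mul_add, Nat.sub_add_cancel hmono]
          omega
        calc ((k * V + 1 : ℕ) : ℕ∞)
            ≤ ((k * (V - (j + 1).factorial.factorization p) + j : ℕ) : ℕ∞) := by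
              exact_mod_cast harith
          _ ≤ (k : ℕ∞) * nu p (dig φ F j) + (j : ℕ∞) := by
              push_cast
              exact add_le_add_left (mul_le_mul_right hnuj _) _
          _ = Wt p k φ F j := rfl
  -- apply the core lemma
  obtain ⟨r₀, hrm, hrf⟩ := exists_lastMin p k (by omega) φ hmonic hd1 h₁ hh₁ne
  obtain ⟨s₀, hsm, hsf⟩ := exists_lastMin p k (by omega) φ hmonic hd1 G₁ hG₁ne
  obtain ⟨hEq, hLB, -⟩ := core p k hp hk φ hmonic hd1 hφirr h₁ G₁ hh₁ne hG₁ne r₀ s₀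
    hrm hsm hrf hsf
  rw [← hFfac] at hEq hLB
  have ht0 : r₀ + s₀ = 0 := by
    by_contra hne
    have h1 : ((k * V + 1 : ℕ) : ℕ∞) ≤ Wt p k φ F (r₀ + s₀) := hWFj _ (by omega)
    have h3 := hLB 0
    rw [hWF0] at h3
    rw [hEq] at h1
    have h4 : ((k * V + 1 : ℕ) : ℕ∞) ≤ ((k * V : ℕ) : ℕ∞) := le_trans h1 h3
    rw [Nat.cast_le] at h4
    omega
  have hr0 : r₀ = 0 := by omega
  have hs0 : s₀ = 0 := by omega
  subst hr0
  have hWk : ((k : ℕ) : ℕ∞) ≤ Wt p k φ h₁ 0 := by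
    rw [Wt]
    calc ((k : ℕ) : ℕ∞) = (k : ℕ∞) * 1 + ((0 : ℕ) : ℕ∞) := by push_cast; ring
      _ ≤ (k : ℕ∞) * nu p (dig φ h₁ 0) + ((0 : ℕ) : ℕ∞) :=
          add_le_add_left (mul_le_mul_right hnu0 _) _
  obtain ⟨M, hMne, hMdeg, hMlead⟩ := exists_top_dig φ hmonic hd1 h₁ hh₁ne
  have hnuM : nu p (dig φ h₁ M) = 0 :=
    nu_eq_zero_of_not_dvd_leadingCoeff p hp _ (by rw [← hMlead]; exact hh₁lead)
  have hMk : M ≤ k := by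
    rw [← hdef] at hMdeg
    have h1 : M * d ≤ h.natDegree := by
      rw [← hh₁deg, hMdeg]
      omega
    by_contra hMk
    push_neg at hMk
    have h2 : (k + 1) * d ≤ M * d := Nat.mul_le_mul_right _ (by omega)
    omega
  rcases Nat.eq_zero_or_pos M with hM0 | hMpos
  · rw [hM0] at hnuM
    rw [hnuM] at hnu0
    simp at hnu0
  · have hlt := hrm.2 M hMpos
    have hWM : Wt p k φ h₁ M = ((M : ℕ) : ℕ∞) := by
      rw [Wt, hnuM, mul_zero, zero_add]
    rw [hWM] at hlt
    have h9 : ((k : ℕ) : ℕ∞) < ((M : ℕ) : ℕ∞) := lt_of_le_of_lt hWk hlt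
    rw [Nat.cast_lt] at h9
    omega
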